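/- Let N ≥ 1, let Q be a real N×N matrix, b ∈ ℝ^N, fix an index i ∈ {1,…,N}, and let K ⊆ {1,…,N}\{i} be a nonempty finite set with scalars δ_k ∈ ℝ for k ∈ K. Assume b_i ≠ 0, that b_k ≠ 0 for all k ∈ K, that the row condition Q_{i:} = (b_i / b_k) · Q_{k:} holds for every k ∈ K (where Q_{j:} denotes the j-th row of Q), and that 1 + Σ_{k∈K} δ_k b_k / b_i ≠ 0 (this nonvanishing holds in particular whenever the deceptive game matrix is invertible, e.g., whenever δ lies in the stability-preserving set Δ). Then the deceptive reaction curve equals the nominal reaction curve: { x ∈ ℝ^N : Q_{i:} x + b_i + Σ_{k∈K} δ_k (Q_{k:} x + b_k) = 0 } = { x ∈ ℝ^N : Q_{i:} x + b_i = 0 }. -/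

import Mathlib

theorem stmt2 (N : ℕ) (hN : 1 ≤ N)
    (Q : Matrix (Fin N) (Fin N) ℝ) (b : Fin N → ℝ)
    (i : Fin N) (K : Finset (Fin N)) (hKne : K.Nonempty) (hiK : i ∉ K)
    (δ : Fin N → ℝ)
    (hbi : b i ≠ 0) (hbk : ∀ k ∈ K, b k ≠ 0)
    (hrow : ∀ k ∈ K, Q i = (b i / b k) • Q k)
    (hnv : 1 + ∑ k ∈ K, δ k * b k / b i ≠ 0) :
    {x : Fin N → ℝ |
        Q.mulVec x i + b i + ∑ k ∈ K, δ k * (Q.mulVec x k + b k) = 0} =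
      {x : Fin N → ℝ | Q.mulVec x i + b i = 0} := by
  ext x
  have hk : ∀ k ∈ K, Q.mulVec x k + b k = (b k / b i) * (Q.mulVec x i + b i) := by
    intro k hkK
    have hbk' := hbk k hkK
    have h1 : Q.mulVec x i = (b i / b k) * Q.mulVec x k := by
      simp [Matrix.mulVec, dotProduct, hrow k hkK, Finset.mul_sum, mul_assoc]
    rw [h1]
    field_simp
  have key : Q.mulVec x i + b i + ∑ k ∈ K, δ k * (Q.mulVec x k + b k)
      = (Q.mulVec x i + b i) * (1 + ∑ k ∈ K, δ k * b k / b i) := by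
    rw [Finset.sum_congr rfl fun k hkK => by rw [hk k hkK]]
    rw [mul_add, mul_one, Finset.mul_sum]
    congr 1
    apply Finset.sum_congr rfl
    intro k hkK
    field_simp
  simp only [Set.mem_setOf_eq, key, mul_eq_zero]
  tauto
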